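/- Let ¬A be a symmetric 0-1 adjacency matrix with degree matrix ¬D, and set ¬D̃ = ¬D + 2I. If ε_n = 1 is the largest eigenvalue of ¬D^{-1/2} ¬A ¬D^{-1/2}, then the largest eigenvalue ω_n of ¬D̃^{-1/2} ¬A ¬D̃^{-1/2} satisfies ω_n ≤ max_i ¬D_ii / (2 + max_i ¬D_ii). -/

import Mathlib

open Matrix BigOperators

lemma quad_le_of_eig_le {n : ℕ} (M : Matrix (Fin n) (Fin n) ℝ) (hM : M.IsHermitian)
    (h : ∀ μ : ℝ, (∃ v : Fin n → ℝ, v ≠ 0 ∧ M *ᵥ v = μ • v) → μ ≤ 1) (y : Fin n → ℝ) :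
    y ⬝ᵥ M *ᵥ y ≤ y ⬝ᵥ y := by
  classical
  have hspec := hM.spectral_theorem
  set U : Matrix (Fin n) (Fin n) ℝ := (hM.eigenvectorUnitary : Matrix (Fin n) (Fin n) ℝ) with hU
  set w : Fin n → ℝ := y ᵥ* U with hw
  have hUU : U * star U = 1 := (Matrix.mem_unitaryGroup_iff).mp hM.eigenvectorUnitary.2
  have hDR : diagonal (RCLike.ofReal ∘ hM.eigenvalues) = diagonal hM.eigenvalues := by
    congr 1
  have hsw : star U *ᵥ y = w := by
    rw [hw, show (star U : Matrix (Fin n) (Fin n) ℝ) = Uᵀ from rfl, Matrix.mulVec_transpose]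
  have hyy : w ⬝ᵥ w = y ⬝ᵥ y := by
    rw [hw, ← Matrix.mulVec_transpose, Matrix.dotProduct_mulVec, Matrix.vecMul_transpose,
      Matrix.mulVec_mulVec, show (Uᵀ : Matrix (Fin n) (Fin n) ℝ) = star U from rfl, hUU,
      Matrix.one_mulVec]
  have hquad : y ⬝ᵥ M *ᵥ y = ∑ i, hM.eigenvalues i * (w i)^2 := by
    conv_lhs => rw [hspec, Unitary.conjStarAlgAut_apply, ← hU, hDR]
    rw [← Matrix.mulVec_mulVec, ← Matrix.mulVec_mulVec, hsw, Matrix.dotProduct_mulVec (A := U),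
      ← hw]
    simp only [dotProduct, Matrix.mulVec_diagonal, sq]
    exact Finset.sum_congr rfl fun i _ => by ring
  have hlam : ∀ i, hM.eigenvalues i ≤ 1 := by
    intro i
    exact h _ ⟨_, (WithLp.ofLp_eq_zero 2).ne.2 <| hM.eigenvectorBasis.orthonormal.ne_zero i, hM.mulVec_eigenvectorBasis i⟩
  calc y ⬝ᵥ M *ᵥ y = ∑ i, hM.eigenvalues i * (w i)^2 := hquad
    _ ≤ ∑ i, 1 * (w i)^2 := by
        apply Finset.sum_le_sum
        intro i _
        exact mul_le_mul_of_nonneg_right (hlam i) (sq_nonneg _)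
    _ = w ⬝ᵥ w := by simp [dotProduct, sq]
    _ = y ⬝ᵥ y := hyy

theorem stmt18 (n : ℕ) (A : Matrix (Fin n) (Fin n) ℝ)
    (hsym : A.IsSymm) (h01 : ∀ i j, A i j = 0 ∨ A i j = 1) (hdiag : ∀ i, A i i = 0)
    (deg : Fin n → ℝ) (hdeg : ∀ i, deg i = ∑ j, A i j) (hdegpos : ∀ i, 0 < deg i)
    (Dh Dth : Matrix (Fin n) (Fin n) ℝ)
    (hDh : Dh = Matrix.diagonal (fun i => 1 / Real.sqrt (deg i)))
    (hDth : Dth = Matrix.diagonal (fun i => 1 / Real.sqrt (deg i + 2)))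
    (hε : IsGreatest {μ : ℝ | ∃ v : Fin n → ℝ, v ≠ 0 ∧ (Dh * A * Dh) *ᵥ v = μ • v} 1)
    (ω dmax : ℝ)
    (hω : IsGreatest {μ : ℝ | ∃ v : Fin n → ℝ, v ≠ 0 ∧ (Dth * A * Dth) *ᵥ v = μ • v} ω)
    (hdmax : IsGreatest {t : ℝ | ∃ i, t = deg i} dmax) :
    ω ≤ dmax / (2 + dmax) := by
  classical
  -- dmax positivity
  obtain ⟨i0, hi0⟩ := hdmax.1
  have hdmaxpos : 0 < dmax := hi0 ▸ hdegpos i0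
  have hdm2 : (0:ℝ) < 2 + dmax := by linarith
  -- Hermitianness of Dh * A * Dh
  have hM1 : (Dh * A * Dh).IsHermitian := by
    have hA : Aᵀ = A := hsym
    show (Dh * A * Dh)ᴴ = Dh * A * Dh
    rw [conjTranspose_eq_transpose_of_trivial, Matrix.transpose_mul, Matrix.transpose_mul, hA,
      hDh, Matrix.diagonal_transpose]
    rw [Matrix.mul_assoc]
  -- quadratic form bound for A
  have key1 : ∀ x : Fin n → ℝ, x ⬝ᵥ A *ᵥ x ≤ ∑ i, deg i * (x i)^2 := by
    intro x
    set y : Fin n → ℝ := fun i => Real.sqrt (deg i) * x i with hy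
    have hsq : ∀ i, Real.sqrt (deg i) ≠ 0 := fun i =>
      ne_of_gt (Real.sqrt_pos.mpr (hdegpos i))
    have hDhy : Dh *ᵥ y = x := by
      funext i
      rw [hDh]
      simp only [Matrix.mulVec_diagonal, hy]
      rw [one_div, inv_mul_eq_div, mul_comm]
      exact mul_div_cancel_right₀ _ (hsq i)
    have h1 : y ⬝ᵥ (Dh * A * Dh) *ᵥ y = x ⬝ᵥ A *ᵥ x := by
      rw [← Matrix.mulVec_mulVec, ← Matrix.mulVec_mulVec, hDhy, Matrix.dotProduct_mulVec (A := Dh)]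
      congr 1
      rw [hDh]
      funext i
      simp only [Matrix.vecMul_diagonal, hy, one_div]
      rw [mul_comm, ← mul_assoc, inv_mul_cancel₀ (hsq i), one_mul]
    have h2 : y ⬝ᵥ (Dh * A * Dh) *ᵥ y ≤ y ⬝ᵥ y :=
      quad_le_of_eig_le _ hM1 (fun μ hμ => hε.2 hμ) y
    have h3 : y ⬝ᵥ y = ∑ i, deg i * (x i)^2 := by
      simp only [dotProduct, hy]
      refine Finset.sum_congr rfl fun i _ => ?_
      have : Real.sqrt (deg i) * Real.sqrt (deg i) = deg i :=
        Real.mul_self_sqrt (le_of_lt (hdegpos i))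
      nlinarith [this]
    rw [← h1, ← h3] at *
    linarith [h2]
  -- the eigenvector for ω
  obtain ⟨v, hv0, hvEq⟩ := hω.1
  set u : Fin n → ℝ := fun i => (1 / Real.sqrt (deg i + 2)) * v i with hu
  have hdeg2 : ∀ i, (0:ℝ) < deg i + 2 := fun i => by linarith [hdegpos i]
  have hDthv : Dth *ᵥ v = u := by
    funext i
    rw [hDth]
    simp [Matrix.mulVec_diagonal, hu]
  have hmain : v ⬝ᵥ (Dth * A * Dth) *ᵥ v = u ⬝ᵥ A *ᵥ u := by
    rw [← Matrix.mulVec_mulVec, ← Matrix.mulVec_mulVec, hDthv, Matrix.dotProduct_mulVec (A := Dth)]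
    congr 1
    rw [hDth]
    funext i
    simp only [Matrix.vecMul_diagonal, hu]
    ring
  have hS : 0 < v ⬝ᵥ v := by
    obtain ⟨i, hi⟩ := Function.ne_iff.mp hv0
    have h1 : 0 < v i * v i := mul_self_pos.mpr hi
    have h2 : v i * v i ≤ ∑ j, v j * v j :=
      Finset.single_le_sum (fun j _ => mul_self_nonneg (v j)) (Finset.mem_univ i)
    simpa [dotProduct] using lt_of_lt_of_le h1 h2
  have hωS : ω * (v ⬝ᵥ v) = v ⬝ᵥ (Dth * A * Dth) *ᵥ v := by
    rw [hvEq, dotProduct_smul]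
    simp [smul_eq_mul]
  have hstep : u ⬝ᵥ A *ᵥ u ≤ (dmax / (2 + dmax)) * (v ⬝ᵥ v) := by
    calc u ⬝ᵥ A *ᵥ u ≤ ∑ i, deg i * (u i)^2 := key1 u
      _ ≤ ∑ i, (dmax / (2 + dmax)) * (v i)^2 := by
          apply Finset.sum_le_sum
          intro i _
          have hui : (u i)^2 = (v i)^2 / (deg i + 2) := by
            simp only [hu, mul_pow, div_pow, one_pow]
            rw [Real.sq_sqrt (le_of_lt (hdeg2 i))]
            ring
          have hdi : deg i ≤ dmax := hdmax.2 ⟨i, rfl⟩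
          have hkey : deg i / (deg i + 2) ≤ dmax / (2 + dmax) := by
            rw [div_le_div_iff₀ (hdeg2 i) hdm2]
            nlinarith
          have heq : deg i * ((v i)^2 / (deg i + 2)) = (deg i / (deg i + 2)) * (v i)^2 := by
            ring
          rw [hui, heq]
          exact mul_le_mul_of_nonneg_right hkey (sq_nonneg _)
      _ = (dmax / (2 + dmax)) * (v ⬝ᵥ v) := by
          simp [dotProduct, Finset.mul_sum, sq]
  have : ω * (v ⬝ᵥ v) ≤ (dmax / (2 + dmax)) * (v ⬝ᵥ v) := by
    rw [hωS, hmain]; exact hstep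
  exact le_of_mul_le_mul_right this hS
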